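/- Let x∈𝔣_β be a homogeneous element of nonzero degree. If r_i(x)=0 for all i∈I, then x=0. Likewise, if ᵢr(x)=0 for all i∈I, then x=0. -/

import Mathlib

open scoped TensorProduct

noncomputable section

/-- A Cartan datum on `I`. -/
structure CartanDatum (I : Type) where
  c : I → I → ℤ
  symm : ∀ i j, c i j = c j i
  pos : ∀ i, 0 < c i i
  even : ∀ i, Even (c i i)
  dvd : ∀ i j, i ≠ j → c i i ∣ 2 * c i j
  nonpos : ∀ i j, i ≠ j → 2 * c i j ≤ 0

namespace CartanDatum

variable {I : Type} (cd : CartanDatum I)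

/-- `d i = (i·i)/2`. -/
def d (i : I) : ℤ := cd.c i i / 2

/-- `a i j = 2(i·j)/(i·i)`. -/
def a (i j : I) : ℤ := 2 * cd.c i j / cd.c i i

/-- Extension of the pairing to `ℕ[I] × ℕ[I]`. -/
def dotN (ν μ : I →₀ ℕ) : ℤ :=
  ν.sum fun i m => μ.sum fun j n => (m : ℤ) * (n : ℤ) * cd.c i j

end CartanDatum

/-- A multiplicative bilinear form `ℕ[I] × ℕ[I] → 𝔽`. -/
structure MultForm (I 𝔽 : Type) [Field 𝔽] where
  f : (I →₀ ℕ) → (I →₀ ℕ) → 𝔽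
  add_left : ∀ ν ν' μ, f (ν + ν') μ = f ν μ * f ν' μ
  add_right : ∀ μ ν ν', f μ (ν + ν') = f μ ν * f μ ν'
  ne_zero : ∀ ν μ, f ν μ ≠ 0

/-- The trivial multiplicative bilinear form, constantly `1`. -/
def trivMF (I 𝔽 : Type) [Field 𝔽] : MultForm I 𝔽 :=
  ⟨fun _ _ => 1, fun _ _ _ => by ring, fun _ _ _ => by ring, fun _ _ => one_ne_zero⟩

variable {I : Type}

/-- The generator `i` of `ℕ[I]`. -/
def δN (i : I) : I →₀ ℕ := Finsupp.single i 1

/-- The model for the free algebra `'𝔣` on the `θ i`. -/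
abbrev FA (𝔽 I : Type) [Field 𝔽] := MonoidAlgebra 𝔽 (FreeMonoid I)

/-- The generator `θ i` of `'𝔣`. -/
def θ (𝔽 : Type) [Field 𝔽] {I : Type} (i : I) : FA 𝔽 I :=
  MonoidAlgebra.of 𝔽 (FreeMonoid I) (FreeMonoid.of i)

/-- The `ℕ[I]`-degree of a word. -/
def wt [DecidableEq I] (w : FreeMonoid I) : I →₀ ℕ :=
  Multiset.toFinsupp (↑(FreeMonoid.toList w))

/-- Homogeneity of degree `ν` in `'𝔣`. -/
def IsHomog {𝔽 : Type} [Field 𝔽] [DecidableEq I] (ν : I →₀ ℕ) (x : FA 𝔽 I) : Prop :=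
  ∀ w ∈ Finsupp.support (x.coeff : FreeMonoid I →₀ 𝔽), wt w = ν

/-- The model for `'𝔣 ⊗ '𝔣` (basis: pairs of words). -/
abbrev TA (𝔽 I : Type) [Field 𝔽] := MonoidAlgebra 𝔽 (FreeMonoid I × FreeMonoid I)

/-- The tensor `x ⊗ y` in the model of `'𝔣 ⊗ '𝔣`. -/
def tmul {𝔽 : Type} [Field 𝔽] (x y : FA 𝔽 I) : TA 𝔽 I :=
  Finsupp.sum (x.coeff : FreeMonoid I →₀ 𝔽) fun w a =>
    Finsupp.sum (y.coeff : FreeMonoid I →₀ 𝔽) fun u b =>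
      MonoidAlgebra.ofCoeff (Finsupp.single (w, u) (a * b) : (FreeMonoid I × FreeMonoid I) →₀ 𝔽)

/-- The twisted multiplication on `'𝔣 ⊗ '𝔣`:
`(x₁⊗x₂)(y₁⊗y₂) = v^{-|y₁|·|x₂|} β(|x₂|,|y₁|) x₁y₁ ⊗ x₂y₂`. -/
def tMul [DecidableEq I] {𝔽 : Type} [Field 𝔽] (cd : CartanDatum I) (v : 𝔽)
    (β : MultForm I 𝔽) (z z' : TA 𝔽 I) : TA 𝔽 I :=
  Finsupp.sum (z.coeff : (FreeMonoid I × FreeMonoid I) →₀ 𝔽) fun p a =>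
    Finsupp.sum (z'.coeff : (FreeMonoid I × FreeMonoid I) →₀ 𝔽) fun q b =>
      MonoidAlgebra.ofCoeff (Finsupp.single (p.1 * q.1, p.2 * q.2)
        (a * b * v ^ (-(cd.dotN (wt q.1) (wt p.2))) * β.f (wt p.2) (wt q.1))
        : (FreeMonoid I × FreeMonoid I) →₀ 𝔽)

/-- The bilinear form on `'𝔣 ⊗ '𝔣` induced by a form `B` on `'𝔣`:
`(x₁⊗x₂, y₁⊗y₂) = α(|x₁|,|x₂|) (x₁,y₁) (x₂,y₂)` for homogeneous `x₁, x₂`. -/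
def pairT [DecidableEq I] {𝔽 : Type} [Field 𝔽] (α : MultForm I 𝔽)
    (B : FA 𝔽 I →ₗ[𝔽] FA 𝔽 I →ₗ[𝔽] 𝔽) (z z' : TA 𝔽 I) : 𝔽 :=
  Finsupp.sum (z.coeff : (FreeMonoid I × FreeMonoid I) →₀ 𝔽) fun p a =>
    Finsupp.sum (z'.coeff : (FreeMonoid I × FreeMonoid I) →₀ 𝔽) fun q b =>
      a * b * α.f (wt p.1) (wt p.2)
        * B (MonoidAlgebra.single p.1 1) (MonoidAlgebra.single q.1 1)
        * B (MonoidAlgebra.single p.2 1) (MonoidAlgebra.single q.2 1)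

/-- The quantum integer `[n]_c`. -/
def qnum {𝔽 : Type} [Field 𝔽] (c : 𝔽) (n : ℕ) : 𝔽 :=
  (c ^ (n : ℤ) - c ^ (-(n : ℤ))) / (c - c⁻¹)

/-- The quantum factorial `[n]_c!`. -/
def qfact {𝔽 : Type} [Field 𝔽] (c : 𝔽) (n : ℕ) : 𝔽 :=
  ∏ k ∈ Finset.range n, qnum c (k + 1)

/-- The divided power `θ_i^{(n)} = θ_i^n / [n]_{v_i}!`. -/
def θdiv [DecidableEq I] {𝔽 : Type} [Field 𝔽] (cd : CartanDatum I) (v : 𝔽)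
    (i : I) (n : ℕ) : FA 𝔽 I :=
  (qfact (v ^ cd.d i) n)⁻¹ • (θ 𝔽 i) ^ n

/-- The twisted quantum Serre element
`D_{ij} = Σ_{k+k'=1-a_{ij}} (-1)^k β(i,j)^{-k} θ_i^{(k)} θ_j θ_i^{(k')}`. -/
def Dij [DecidableEq I] {𝔽 : Type} [Field 𝔽] (cd : CartanDatum I) (v : 𝔽)
    (g : I → I → 𝔽) (i j : I) : FA 𝔽 I :=
  ∑ k ∈ Finset.range ((1 - cd.a i j).toNat + 1),
    ((-1 : 𝔽) ^ k * ((g i j)⁻¹) ^ k) •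
      (θdiv cd v i k * θ 𝔽 j * θdiv cd v i ((1 - cd.a i j).toNat - k))

end

noncomputable section
variable {I : Type}

namespace HVAux
set_option linter.unusedSectionVars false

variable {𝔽 : Type} [Field 𝔽] [DecidableEq I]

lemma mf_zero_right (mf : MultForm I 𝔽) (μ : I →₀ ℕ) : mf.f μ 0 = 1 := by
  have h := mf.add_right μ 0 0
  simp only [add_zero] at h
  have h2 : mf.f μ 0 * 1 = mf.f μ 0 * mf.f μ 0 := by rw [mul_one]; exact h
  exact (mul_left_cancel₀ (mf.ne_zero μ 0) h2).symm

lemma mf_zero_left (mf : MultForm I 𝔽) (μ : I →₀ ℕ) : mf.f 0 μ = 1 := by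
  have h := mf.add_left 0 0 μ
  simp only [add_zero] at h
  have h2 : mf.f 0 μ * 1 = mf.f 0 μ * mf.f 0 μ := by rw [mul_one]; exact h
  exact (mul_left_cancel₀ (mf.ne_zero 0 μ) h2).symm

lemma wt_one : wt (1 : FreeMonoid I) = 0 := by
  simp [wt, FreeMonoid.toList_one]

lemma wt_mul (w u : FreeMonoid I) : wt (w * u) = wt w + wt u := by
  simp [wt, FreeMonoid.toList_mul, ← Multiset.coe_add]

lemma wt_of (i : I) : wt (FreeMonoid.of i) = δN i := by
  simp [wt, FreeMonoid.toList_of, δN]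

lemma wt_eq_zero {w : FreeMonoid I} (h : wt w = 0) : w = 1 := by
  have : ((FreeMonoid.toList w : Multiset I)) = 0 := by
    apply Multiset.toFinsupp.injective
    simpa [wt] using h
  have : FreeMonoid.toList w = [] := by simpa using this
  exact FreeMonoid.toList.injective (by simpa [FreeMonoid.toList_one] using this)

lemma wt_eq_delta {w : FreeMonoid I} {i : I} (h : wt w = δN i) : w = FreeMonoid.of i := by
  have h1 : ((FreeMonoid.toList w : Multiset I)) = ({i} : Multiset I) := by
    apply Multiset.toFinsupp.injective
    simpa [wt, δN, Multiset.toFinsupp_singleton] using h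
  have : FreeMonoid.toList w = [i] := by
    rwa [Multiset.coe_eq_singleton] at h1
  exact FreeMonoid.toList.injective (by simpa [FreeMonoid.toList_of] using this)

lemma of_mul_ne_one (i : I) (w : FreeMonoid I) : FreeMonoid.of i * w ≠ 1 := by
  intro h
  have := congrArg FreeMonoid.toList h
  simp [FreeMonoid.toList_mul, FreeMonoid.toList_of, FreeMonoid.toList_one] at this

lemma exists_cons {w : FreeMonoid I} (h : w ≠ 1) :
    ∃ i w', w = FreeMonoid.of i * w' := by
  induction w using FreeMonoid.recOn with
  | one => exact absurd rfl h
  | of_mul i w' _ => exact ⟨i, w', rfl⟩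

lemma exists_concat {w : FreeMonoid I} (h : w ≠ 1) :
    ∃ w' i, w = w' * FreeMonoid.of i := by
  have hl : FreeMonoid.toList w ≠ [] := fun hn => h (FreeMonoid.toList.injective hn)
  refine ⟨FreeMonoid.ofList ((FreeMonoid.toList w).dropLast), (FreeMonoid.toList w).getLast hl, ?_⟩
  apply FreeMonoid.toList.injective
  simp only [FreeMonoid.toList_mul, FreeMonoid.toList_of, FreeMonoid.toList_ofList]
  exact (List.dropLast_append_getLast hl).symm

lemma dotN_zero_left (cd : CartanDatum I) (μ : I →₀ ℕ) : cd.dotN 0 μ = 0 := by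
  simp [CartanDatum.dotN]

lemma dotN_zero_right (cd : CartanDatum I) (ν : I →₀ ℕ) : cd.dotN ν 0 = 0 := by
  simp [CartanDatum.dotN]

lemma dotN_comm (cd : CartanDatum I) (ν μ : I →₀ ℕ) : cd.dotN ν μ = cd.dotN μ ν := by
  unfold CartanDatum.dotN
  rw [Finsupp.sum, Finsupp.sum]
  simp only [Finsupp.sum]
  rw [Finset.sum_comm]
  refine Finset.sum_congr rfl fun j _ => Finset.sum_congr rfl fun i _ => ?_
  rw [cd.symm i j]; ring

instance : DecidableEq (FreeMonoid I) := fun a b =>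
  decidable_of_iff (FreeMonoid.toList a = FreeMonoid.toList b)
    ⟨fun h => FreeMonoid.toList.injective h, fun h => by rw [h]⟩

lemma θ_def (i : I) : θ 𝔽 i = MonoidAlgebra.single (FreeMonoid.of i) (1 : 𝔽) := by
  simp [θ, MonoidAlgebra.of_apply]

lemma one_def' : (1 : FA 𝔽 I) = MonoidAlgebra.single (1 : FreeMonoid I) (1 : 𝔽) :=
  MonoidAlgebra.one_def

lemma tmul_single_single (w u : FreeMonoid I) (a b : 𝔽) :
    tmul (MonoidAlgebra.single w a) (MonoidAlgebra.single u b)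
      = MonoidAlgebra.single (w, u) (a * b) := by
  unfold tmul
  rw [MonoidAlgebra.coeff_single, MonoidAlgebra.coeff_single, Finsupp.sum_single_index (by simp),
    Finsupp.sum_single_index (by simp), MonoidAlgebra.ofCoeff_single]

lemma pairT_single_right (α : MultForm I 𝔽) (B : FA 𝔽 I →ₗ[𝔽] FA 𝔽 I →ₗ[𝔽] 𝔽)
    (z : TA 𝔽 I) (q : FreeMonoid I × FreeMonoid I) (b : 𝔽) :
    pairT α B z (MonoidAlgebra.single q b)
      = Finsupp.sum z.coeff fun p a => a * b * α.f (wt p.1) (wt p.2)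
          * B (MonoidAlgebra.single p.1 1) (MonoidAlgebra.single q.1 1)
          * B (MonoidAlgebra.single p.2 1) (MonoidAlgebra.single q.2 1) := by
  unfold pairT
  simp only [MonoidAlgebra.coeff_single]
  exact Finsupp.sum_congr fun p _ => Finsupp.sum_single_index (by ring)

lemma pairT_single_left (α : MultForm I 𝔽) (B : FA 𝔽 I →ₗ[𝔽] FA 𝔽 I →ₗ[𝔽] 𝔽)
    (p : FreeMonoid I × FreeMonoid I) (a : 𝔽) (z' : TA 𝔽 I) :
    pairT α B (MonoidAlgebra.single p a) z'
      = Finsupp.sum z'.coeff fun q b => a * b * α.f (wt p.1) (wt p.2)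
          * B (MonoidAlgebra.single p.1 1) (MonoidAlgebra.single q.1 1)
          * B (MonoidAlgebra.single p.2 1) (MonoidAlgebra.single q.2 1) := by
  unfold pairT
  rw [MonoidAlgebra.coeff_single, Finsupp.sum_single_index]
  simp

lemma pairT_single_single (α : MultForm I 𝔽) (B : FA 𝔽 I →ₗ[𝔽] FA 𝔽 I →ₗ[𝔽] 𝔽)
    (p q : FreeMonoid I × FreeMonoid I) (a b : 𝔽) :
    pairT α B (MonoidAlgebra.single p a) (MonoidAlgebra.single q b)
      = a * b * α.f (wt p.1) (wt p.2)
          * B (MonoidAlgebra.single p.1 1) (MonoidAlgebra.single q.1 1)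
          * B (MonoidAlgebra.single p.2 1) (MonoidAlgebra.single q.2 1) := by
  rw [pairT_single_left]
  exact Finsupp.sum_single_index (by ring)

lemma pairT_add_left (α : MultForm I 𝔽) (B : FA 𝔽 I →ₗ[𝔽] FA 𝔽 I →ₗ[𝔽] 𝔽)
    (z₁ z₂ z' : TA 𝔽 I) :
    pairT α B (z₁ + z₂) z' = pairT α B z₁ z' + pairT α B z₂ z' := by
  unfold pairT
  rw [MonoidAlgebra.coeff_add, Finsupp.sum_add_index' (by intro p; simp) ?hadd]
  case hadd =>
    intro p a₁ a₂
    rw [← Finsupp.sum_add]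
    exact Finsupp.sum_congr fun q _ => by ring

variable {cd : CartanDatum I} {v : 𝔽} {β : MultForm I 𝔽}

lemma tMul_single_left (p : FreeMonoid I × FreeMonoid I) (a : 𝔽) (z' : TA 𝔽 I) :
    tMul cd v β (MonoidAlgebra.single p a) z'
      = Finsupp.sum z'.coeff fun q b =>
          MonoidAlgebra.single (p.1 * q.1, p.2 * q.2)
            (a * b * v ^ (-(cd.dotN (wt q.1) (wt p.2))) * β.f (wt p.2) (wt q.1)) := by
  unfold tMul
  rw [MonoidAlgebra.coeff_single, Finsupp.sum_single_index]
  · rfl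
  · simp

lemma tMul_add_left (z₁ z₂ z' : TA 𝔽 I) :
    tMul cd v β (z₁ + z₂) z' = tMul cd v β z₁ z' + tMul cd v β z₂ z' := by
  unfold tMul
  rw [MonoidAlgebra.coeff_add, Finsupp.sum_add_index' (by intro p; simp) ?hadd]
  case hadd =>
    intro p a₁ a₂
    rw [← Finsupp.sum_add]
    refine Finsupp.sum_congr fun q _ => ?_
    rw [← MonoidAlgebra.ofCoeff_add, ← Finsupp.single_add]
    congr 2
    ring

lemma support_tMul (z z' : TA 𝔽 I) {p : FreeMonoid I × FreeMonoid I}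
    (hp : p ∈ (tMul cd v β z z').coeff.support) :
    ∃ P ∈ z.coeff.support, ∃ Q ∈ z'.coeff.support, p = (P.1 * Q.1, P.2 * Q.2) := by
  unfold tMul at hp
  rw [MonoidAlgebra.coeff_finsuppSum] at hp
  have h1 := Finsupp.support_sum hp
  obtain ⟨P, hP, h2⟩ := Finset.mem_biUnion.1 h1
  rw [MonoidAlgebra.coeff_finsuppSum] at h2
  have h3 := Finsupp.support_sum h2
  obtain ⟨Q, hQ, h4⟩ := Finset.mem_biUnion.1 h3
  have h5 := Finsupp.support_single_subset h4
  exact ⟨P, hP, Q, hQ, Finset.mem_singleton.1 h5⟩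

/-- Component extraction: first coordinate equal to `e`. -/
def comp1 (e : FreeMonoid I) : TA 𝔽 I →ₗ[𝔽] FA 𝔽 I :=
  (Finsupp.lsum 𝔽 fun p : FreeMonoid I × FreeMonoid I =>
    if p.1 = e then (MonoidAlgebra.lsingle (R := 𝔽) p.2 : 𝔽 →ₗ[𝔽] FA 𝔽 I) else 0)
    ∘ₗ (MonoidAlgebra.coeffLinearEquiv 𝔽).toLinearMap

/-- Component extraction: second coordinate equal to `e`. -/
def comp2 (e : FreeMonoid I) : TA 𝔽 I →ₗ[𝔽] FA 𝔽 I :=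
  (Finsupp.lsum 𝔽 fun p : FreeMonoid I × FreeMonoid I =>
    if p.2 = e then (MonoidAlgebra.lsingle (R := 𝔽) p.1 : 𝔽 →ₗ[𝔽] FA 𝔽 I) else 0)
    ∘ₗ (MonoidAlgebra.coeffLinearEquiv 𝔽).toLinearMap

lemma comp1_single (e : FreeMonoid I) (p : FreeMonoid I × FreeMonoid I) (c : 𝔽) :
    comp1 e (MonoidAlgebra.single p c)
      = if p.1 = e then (MonoidAlgebra.single p.2 c : FA 𝔽 I) else 0 := by
  rw [comp1, LinearMap.comp_apply, LinearEquiv.coe_coe, MonoidAlgebra.coeffLinearEquiv_apply,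
    MonoidAlgebra.coeff_single]
  erw [Finsupp.lsum_single]
  split <;> simp

lemma comp2_single (e : FreeMonoid I) (p : FreeMonoid I × FreeMonoid I) (c : 𝔽) :
    comp2 e (MonoidAlgebra.single p c)
      = if p.2 = e then (MonoidAlgebra.single p.1 c : FA 𝔽 I) else 0 := by
  rw [comp2, LinearMap.comp_apply, LinearEquiv.coe_coe, MonoidAlgebra.coeffLinearEquiv_apply,
    MonoidAlgebra.coeff_single]
  erw [Finsupp.lsum_single]
  split <;> simp

lemma comp1_apply (e : FreeMonoid I) (z : TA 𝔽 I) :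
    comp1 e z = Finsupp.sum z.coeff fun p a =>
      if p.1 = e then (MonoidAlgebra.single p.2 a : FA 𝔽 I) else 0 := by
  rw [comp1, LinearMap.comp_apply, LinearEquiv.coe_coe, MonoidAlgebra.coeffLinearEquiv_apply]
  erw [Finsupp.lsum_apply]
  exact Finsupp.sum_congr fun p _ => by split <;> simp

lemma comp2_apply (e : FreeMonoid I) (z : TA 𝔽 I) :
    comp2 e z = Finsupp.sum z.coeff fun p a =>
      if p.2 = e then (MonoidAlgebra.single p.1 a : FA 𝔽 I) else 0 := by
  rw [comp2, LinearMap.comp_apply, LinearEquiv.coe_coe, MonoidAlgebra.coeffLinearEquiv_apply]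
  erw [Finsupp.lsum_apply]
  exact Finsupp.sum_congr fun p _ => by split <;> simp

lemma comp1_tMul_single (e : FreeMonoid I) (p : FreeMonoid I × FreeMonoid I) (a : 𝔽)
    (z' : TA 𝔽 I) :
    comp1 e (tMul cd v β (MonoidAlgebra.single p a) z')
      = Finsupp.sum z'.coeff fun q b =>
          if p.1 * q.1 = e then
            (MonoidAlgebra.single (p.2 * q.2)
              (a * b * v ^ (-(cd.dotN (wt q.1) (wt p.2))) * β.f (wt p.2) (wt q.1)) : FA 𝔽 I)
          else 0 := by
  rw [tMul_single_left, map_finsuppSum]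
  exact Finsupp.sum_congr fun q _ => comp1_single _ _ _

lemma comp2_tMul_single (e : FreeMonoid I) (p : FreeMonoid I × FreeMonoid I) (a : 𝔽)
    (z' : TA 𝔽 I) :
    comp2 e (tMul cd v β (MonoidAlgebra.single p a) z')
      = Finsupp.sum z'.coeff fun q b =>
          if p.2 * q.2 = e then
            (MonoidAlgebra.single (p.1 * q.1)
              (a * b * v ^ (-(cd.dotN (wt q.1) (wt p.2))) * β.f (wt p.2) (wt q.1)) : FA 𝔽 I)
          else 0 := by
  rw [tMul_single_left, map_finsuppSum]
  exact Finsupp.sum_congr fun q _ => comp2_single _ _ _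

lemma of_mul_eq_of (i j : I) (q : FreeMonoid I) :
    FreeMonoid.of j * q = FreeMonoid.of i ↔ j = i ∧ q = 1 := by
  constructor
  · intro h
    have h' := congrArg FreeMonoid.toList h
    simp only [FreeMonoid.toList_mul, FreeMonoid.toList_of] at h'
    have h'' : j :: FreeMonoid.toList q = [i] := by simpa using h'
    rw [List.cons.injEq] at h''
    exact ⟨h''.1, FreeMonoid.toList.injective h''.2⟩
  · rintro ⟨rfl, rfl⟩
    exact mul_one _

lemma comp1_tMul_θ1 (i : I) (a : 𝔽) (z' : TA 𝔽 I) :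
    comp1 1 (tMul cd v β (MonoidAlgebra.single ((FreeMonoid.of i, 1) : FreeMonoid I × FreeMonoid I) a) z') = 0 := by
  rw [comp1_tMul_single]
  refine (Finsupp.sum_congr fun q hq => ?_).trans (Finsupp.sum_fun_zero _)
  simp [of_mul_ne_one]

lemma comp1_tMul_1θ (i : I) (z' : TA 𝔽 I) :
    comp1 1 (tMul cd v β (MonoidAlgebra.single (((1 : FreeMonoid I), FreeMonoid.of i)) (1:𝔽)) z')
      = MonoidAlgebra.single (FreeMonoid.of i) (1:𝔽) * comp1 1 z' := by
  rw [comp1_tMul_single, comp1_apply, Finsupp.sum, Finsupp.sum, Finset.mul_sum]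
  refine Finset.sum_congr rfl fun q hq => ?_
  by_cases h1 : q.1 = 1
  · rw [if_pos (show ((1 : FreeMonoid I), FreeMonoid.of i).1 * q.1 = 1 by simp [h1]), if_pos h1,
      MonoidAlgebra.single_mul_single]
    simp [h1, wt_one, dotN_zero_left, mf_zero_right]
  · rw [if_neg (by simpa using h1), if_neg h1, mul_zero]

lemma comp2_tMul_1θ (i : I) (a : 𝔽) (z' : TA 𝔽 I) :
    comp2 1 (tMul cd v β (MonoidAlgebra.single (((1 : FreeMonoid I), FreeMonoid.of i)) a) z') = 0 := by
  rw [comp2_tMul_single]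
  refine (Finsupp.sum_congr fun q hq => ?_).trans (Finsupp.sum_fun_zero _)
  simp [of_mul_ne_one]

lemma comp2_tMul_θ1 (i : I) (z' : TA 𝔽 I) :
    comp2 1 (tMul cd v β (MonoidAlgebra.single ((FreeMonoid.of i, (1 : FreeMonoid I))) (1:𝔽)) z')
      = MonoidAlgebra.single (FreeMonoid.of i) (1:𝔽) * comp2 1 z' := by
  rw [comp2_tMul_single, comp2_apply, Finsupp.sum, Finsupp.sum, Finset.mul_sum]
  refine Finset.sum_congr rfl fun q hq => ?_
  by_cases h2 : q.2 = 1
  · rw [if_pos (show (FreeMonoid.of i, (1 : FreeMonoid I)).2 * q.2 = 1 by simp [h2]), if_pos h2,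
      MonoidAlgebra.single_mul_single]
    simp [h2, wt_one, dotN_zero_right, mf_zero_left]
  · rw [if_neg (by simpa using h2), if_neg h2, mul_zero]

lemma comp1of_tMul_θ1 (i j : I) (z' : TA 𝔽 I) :
    comp1 (FreeMonoid.of i)
        (tMul cd v β (MonoidAlgebra.single ((FreeMonoid.of j, (1 : FreeMonoid I))) (1:𝔽)) z')
      = if i = j then comp1 1 z' else 0 := by
  rw [comp1_tMul_single]
  by_cases hij : i = j
  · subst hij
    rw [if_pos rfl, comp1_apply]
    refine Finsupp.sum_congr fun q hq => ?_
    by_cases h1 : q.1 = 1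
    · rw [if_pos (by simpa [of_mul_eq_of] using h1), if_pos h1]
      simp [wt_one, dotN_zero_right, mf_zero_left]
    · rw [if_neg (by simp [of_mul_eq_of, h1]), if_neg h1]
  · rw [if_neg hij]
    refine (Finsupp.sum_congr fun q hq => ?_).trans (Finsupp.sum_fun_zero _)
    rw [if_neg (by simp [of_mul_eq_of]; intro h; exact absurd h.symm hij)]

lemma comp1of_tMul_1θ (i j : I) (z' : TA 𝔽 I) :
    comp1 (FreeMonoid.of i)
        (tMul cd v β (MonoidAlgebra.single (((1 : FreeMonoid I), FreeMonoid.of j)) (1:𝔽)) z')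
      = (v ^ (-(cd.dotN (δN i) (δN j))) * β.f (δN j) (δN i))
          • (MonoidAlgebra.single (FreeMonoid.of j) (1:𝔽) * comp1 (FreeMonoid.of i) z') := by
  rw [comp1_tMul_single, comp1_apply, Finsupp.sum, Finsupp.sum, Finset.mul_sum, Finset.smul_sum]
  refine Finset.sum_congr rfl fun q hq => ?_
  by_cases h1 : q.1 = FreeMonoid.of i
  · rw [if_pos (by simpa using h1), if_pos h1, MonoidAlgebra.single_mul_single,
      MonoidAlgebra.smul_single']
    congr 1
    rw [h1, wt_of, wt_of]
    ring
  · rw [if_neg (by simpa using h1), if_neg h1, mul_zero, smul_zero]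

lemma comp2of_tMul_θ1 (i j : I) (z' : TA 𝔽 I) :
    comp2 (FreeMonoid.of i)
        (tMul cd v β (MonoidAlgebra.single ((FreeMonoid.of j, (1 : FreeMonoid I))) (1:𝔽)) z')
      = MonoidAlgebra.single (FreeMonoid.of j) (1:𝔽) * comp2 (FreeMonoid.of i) z' := by
  rw [comp2_tMul_single, comp2_apply, Finsupp.sum, Finsupp.sum, Finset.mul_sum]
  refine Finset.sum_congr rfl fun q hq => ?_
  by_cases h2 : q.2 = FreeMonoid.of i
  · rw [if_pos (by simpa using h2), if_pos h2, MonoidAlgebra.single_mul_single]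
    simp [wt_one, dotN_zero_right, mf_zero_left]
  · rw [if_neg (by simpa using h2), if_neg h2, mul_zero]

lemma comp2of_tMul_1θ (i j : I) (z' : TA 𝔽 I) (μ : I →₀ ℕ)
    (hbw : ∀ q ∈ z'.coeff.support, q.2 = 1 → wt q.1 = μ) :
    comp2 (FreeMonoid.of i)
        (tMul cd v β (MonoidAlgebra.single (((1 : FreeMonoid I), FreeMonoid.of j)) (1:𝔽)) z')
      = if i = j then
          (v ^ (-(cd.dotN μ (δN j))) * β.f (δN j) μ) • comp2 1 z'
        else 0 := by
  rw [comp2_tMul_single]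
  by_cases hij : i = j
  · subst hij
    rw [if_pos rfl, comp2_apply, Finsupp.smul_sum]
    refine Finsupp.sum_congr fun q hq => ?_
    by_cases h2 : q.2 = 1
    · rw [if_pos (by simpa [of_mul_eq_of] using h2), if_pos h2, MonoidAlgebra.smul_single']
      congr 1
      rw [hbw q hq h2, wt_of]
      ring
    · rw [if_neg (by simp [of_mul_eq_of, h2]), if_neg h2, smul_zero]
  · rw [if_neg hij]
    refine (Finsupp.sum_congr fun q hq => ?_).trans (Finsupp.sum_fun_zero _)
    rw [if_neg (by simp [of_mul_eq_of]; intro h; exact absurd h.symm hij)]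

lemma single_eq_smul (x : FreeMonoid I) (a : 𝔽) :
    (MonoidAlgebra.single x a : FA 𝔽 I) = a • MonoidAlgebra.single x 1 := by
  rw [MonoidAlgebra.smul_single', mul_one]

lemma single_eq_smul' (x : FreeMonoid I) (a : 𝔽) :
    (MonoidAlgebra.single x a : FA 𝔽 I) = a • MonoidAlgebra.single x 1 :=
  single_eq_smul x a

end HVAux

end

open HVAux in
theorem homogeneous_vanishing_criterion
    {I : Type} [Fintype I] [DecidableEq I] (cd : CartanDatum I)
    {𝔽 : Type} [Field 𝔽] [CharZero 𝔽] (v : 𝔽) (hv : Transcendental ℚ v)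
    (α β : MultForm I 𝔽)
    (hαβ : ∀ i j : I, β.f (δN i) (δN j) * α.f (δN j) (δN i)
      = β.f (δN j) (δN i) * α.f (δN i) (δN j))
    (hββ : ∀ i j : I, β.f (δN i) (δN j) * β.f (δN j) (δN i) = 1)
    (hβii : ∀ i : I, β.f (δN i) (δN i) = 1)
    (r : FA 𝔽 I →ₗ[𝔽] TA 𝔽 I)
    (hr1 : r 1 = tmul 1 1)
    (hrθ : ∀ i : I, r (θ 𝔽 i) = tmul (θ 𝔽 i) 1 + tmul 1 (θ 𝔽 i))
    (hrm : ∀ x y : FA 𝔽 I, r (x * y) = tMul cd v β (r x) (r y))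
    (B : FA 𝔽 I →ₗ[𝔽] FA 𝔽 I →ₗ[𝔽] 𝔽)
    (hBsymm : ∀ x y, B x y = B y x)
    (hB1 : B 1 1 = 1)
    (hBθ : ∀ i j : I, B (θ 𝔽 i) (θ 𝔽 j) = if i = j then (1 - v ^ (-(cd.c i i)))⁻¹ else 0)
    (hBr : ∀ x y' y'', B x (y' * y'') = pairT α B (r x) (tmul y' y''))
    (hBl : ∀ x' x'' y, B (x' * x'') y = pairT α B (tmul x' x'') (r y))
    (ri : I → (FA 𝔽 I →ₗ[𝔽] FA 𝔽 I))
    (hri1 : ∀ i, ri i 1 = 0)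
    (hriθ : ∀ i j : I, ri i (θ 𝔽 j) = if i = j then 1 else 0)
    (hrim : ∀ (i : I) (ν μ : I →₀ ℕ) (x y : FA 𝔽 I), IsHomog ν x → IsHomog μ y →
      ri i (x * y) = (v ^ (-(cd.dotN (δN i) μ)) * β.f (δN i) μ) • (ri i x * y) + x * ri i y)
    (ir : I → (FA 𝔽 I →ₗ[𝔽] FA 𝔽 I))
    (hir1 : ∀ i, ir i 1 = 0)
    (hirθ : ∀ i j : I, ir i (θ 𝔽 j) = if i = j then 1 else 0)
    (hirm : ∀ (i : I) (ν μ : I →₀ ℕ) (x y : FA 𝔽 I), IsHomog ν x → IsHomog μ y →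
      ir i (x * y) = ir i x * y + (v ^ (-(cd.dotN (δN i) ν)) * β.f ν (δN i)) • (x * ir i y))
    :
    ∀ (ν : I →₀ ℕ), ν ≠ 0 → ∀ x : FA 𝔽 I, IsHomog ν x →
      ((∀ i : I, ∀ z, B (ri i x) z = 0) → ∀ z, B x z = 0) ∧
      ((∀ i : I, ∀ z, B (ir i x) z = 0) → ∀ z, B x z = 0) := by
  -- explicit formulas for r on generators
  have hone : (1 : FA 𝔽 I) = MonoidAlgebra.single (1 : FreeMonoid I) (1 : 𝔽) :=
    MonoidAlgebra.one_def
  have r1e : r 1 = MonoidAlgebra.single ((1, 1) : FreeMonoid I × FreeMonoid I) (1 : 𝔽) := by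
    rw [hr1, hone, tmul_single_single, mul_one]
  have rθe : ∀ i : I, r (θ 𝔽 i)
      = MonoidAlgebra.single ((FreeMonoid.of i, 1) : FreeMonoid I × FreeMonoid I) (1 : 𝔽)
        + MonoidAlgebra.single ((1, FreeMonoid.of i) : FreeMonoid I × FreeMonoid I) (1 : 𝔽) := by
    intro i
    rw [hrθ, θ_def, hone, tmul_single_single, tmul_single_single, mul_one]
  have hsingle_mul : ∀ (w u : FreeMonoid I),
      (MonoidAlgebra.single w (1:𝔽) : FA 𝔽 I) * MonoidAlgebra.single u 1
        = MonoidAlgebra.single (w * u) 1 := by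
    intro w u
    rw [MonoidAlgebra.single_mul_single, mul_one]
  have rse : ∀ (i : I) (w : FreeMonoid I),
      r (MonoidAlgebra.single (FreeMonoid.of i * w) (1:𝔽))
        = tMul cd v β (r (θ 𝔽 i)) (r (MonoidAlgebra.single w 1)) := by
    intro i w
    rw [← hsingle_mul, ← θ_def, hrm]
  have hsuppθ : ∀ i : I, ∀ P ∈ (r (θ 𝔽 i)).coeff.support,
      P = ((FreeMonoid.of i, 1) : FreeMonoid I × FreeMonoid I)
        ∨ P = ((1, FreeMonoid.of i) : FreeMonoid I × FreeMonoid I) := by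
    intro i P hP
    rw [rθe, MonoidAlgebra.coeff_add, MonoidAlgebra.coeff_single, MonoidAlgebra.coeff_single] at hP
    rcases Finset.mem_union.1 (Finsupp.support_add hP) with h | h
    · exact Or.inl (Finset.mem_singleton.1 (Finsupp.support_single_subset h))
    · exact Or.inr (Finset.mem_singleton.1 (Finsupp.support_single_subset h))
  -- biweight lemma
  have biwt : ∀ w : FreeMonoid I, ∀ p ∈ (r (MonoidAlgebra.single w (1:𝔽))).coeff.support,
      wt p.1 + wt p.2 = wt w := by
    intro w
    induction w using FreeMonoid.recOn with
    | one =>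
      rw [show (MonoidAlgebra.single (1:FreeMonoid I) (1:𝔽)) = (1 : FA 𝔽 I) from hone.symm, r1e]
      intro p hp
      rw [MonoidAlgebra.coeff_single] at hp
      have := Finset.mem_singleton.1 (Finsupp.support_single_subset hp)
      subst this
      simp [wt_one]
    | of_mul i w ihw =>
      rw [rse]
      intro p hp
      obtain ⟨P, hP, Q, hQ, rfl⟩ := support_tMul _ _ hp
      have hQ' := ihw Q hQ
      have hwmul : wt (FreeMonoid.of i * w) = δN i + wt w := by rw [wt_mul, wt_of]
      rcases hsuppθ i P hP with rfl | rfl <;>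
        simp only [wt_mul, wt_of, wt_one, one_mul, mul_one, hwmul] <;>
        rw [← hQ'] <;> abel
  have hof1 : ∀ i : I, (1 : FreeMonoid I) ≠ FreeMonoid.of i := by
    intro i h
    exact of_mul_ne_one i 1 (by rw [mul_one]; exact h.symm)
  have honee : (MonoidAlgebra.single (1:FreeMonoid I) (1:𝔽)) = (1 : FA 𝔽 I) := hone.symm
  have homog_single : ∀ w : FreeMonoid I, IsHomog (wt w) (MonoidAlgebra.single w (1:𝔽)) := by
    intro w u hu
    have h := Finsupp.support_single_subset hu
    rw [Finset.mem_singleton] at h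
    rw [h]
  have homog_θ : ∀ i : I, IsHomog (δN i) (θ 𝔽 i) := by
    intro i
    rw [θ_def, ← wt_of i]
    exact homog_single _
  have c1one : ∀ w : FreeMonoid I,
      comp1 1 (r (MonoidAlgebra.single w (1:𝔽))) = MonoidAlgebra.single w 1 := by
    intro w
    induction w using FreeMonoid.recOn with
    | one => rw [honee, r1e]; simp [comp1_single, honee]
    | of_mul i w ihw =>
      rw [rse, rθe, tMul_add_left, map_add, comp1_tMul_θ1, comp1_tMul_1θ, zero_add, ihw,
        hsingle_mul]
  have c2one : ∀ w : FreeMonoid I,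
      comp2 1 (r (MonoidAlgebra.single w (1:𝔽))) = MonoidAlgebra.single w 1 := by
    intro w
    induction w using FreeMonoid.recOn with
    | one => rw [honee, r1e]; simp [comp2_single, honee]
    | of_mul i w ihw =>
      rw [rse, rθe, tMul_add_left, map_add, comp2_tMul_θ1, comp2_tMul_1θ, add_zero, ihw,
        hsingle_mul]
  have c1of : ∀ (i : I) (w : FreeMonoid I),
      comp1 (FreeMonoid.of i) (r (MonoidAlgebra.single w (1:𝔽)))
        = ir i (MonoidAlgebra.single w 1) := by
    intro i w
    induction w using FreeMonoid.recOn with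
    | one =>
      rw [honee, r1e, hir1 i]
      simp [comp1_single, hof1 i]
    | of_mul j w ihw =>
      rw [rse, rθe, tMul_add_left, map_add, comp1of_tMul_θ1, comp1of_tMul_1θ, c1one, ihw,
        ← hsingle_mul, ← θ_def, hirm i (δN j) (wt w) _ _ (homog_θ j) (homog_single w), hirθ]
      by_cases hij : i = j <;> simp [hij]
  have c2of : ∀ (i : I) (w : FreeMonoid I),
      comp2 (FreeMonoid.of i) (r (MonoidAlgebra.single w (1:𝔽)))
        = ri i (MonoidAlgebra.single w 1) := by
    intro i w
    induction w using FreeMonoid.recOn with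
    | one =>
      rw [honee, r1e, hri1 i]
      simp [comp2_single, hof1 i]
    | of_mul j w ihw =>
      rw [rse, rθe, tMul_add_left, map_add, comp2of_tMul_θ1,
        comp2of_tMul_1θ i j _ (wt w)
          (fun q hq h2 => by have hb := biwt w q hq; rwa [h2, wt_one, add_zero] at hb),
        c2one, ihw,
        ← hsingle_mul, ← θ_def, hrim i (δN j) (wt w) _ _ (homog_θ j) (homog_single w), hriθ]
      by_cases hij : i = j <;> simp [hij, dotN_comm cd (wt w) (δN j)] <;> try abel
  have hθB : ∀ j : I, (MonoidAlgebra.single (FreeMonoid.of j) (1:𝔽) : FA 𝔽 I) = θ 𝔽 j :=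
    fun j => (θ_def j).symm
  have hBθ1 : ∀ j : I, B (θ 𝔽 j) 1 = 0 := by
    intro j
    have h := hBr (θ 𝔽 j) 1 1
    rw [one_mul, hone, tmul_single_single, mul_one, rθe, pairT_add_left, pairT_single_single,
      pairT_single_single] at h
    simp only [wt_of, wt_one, mf_zero_right, mf_zero_left, honee, hB1, one_mul, mul_one] at h
    -- h : B (θ j) 1 = B (θ j) 1 + B (θ j) 1  (up to arrangement)
    rw [θ_def j] at h ⊢
    linear_combination -h
  have hBθ1s : ∀ j : I, B (MonoidAlgebra.single (FreeMonoid.of j) (1:𝔽)) 1 = 0 := by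
    intro j; rw [hθB j]; exact hBθ1 j
  have hBw1 : ∀ w : FreeMonoid I, w ≠ 1 → B (MonoidAlgebra.single w (1:𝔽)) 1 = 0 := by
    intro w hw
    obtain ⟨j, w', rfl⟩ := exists_cons hw
    have h := hBl (θ 𝔽 j) (MonoidAlgebra.single w' 1) 1
    rw [θ_def j, hsingle_mul, r1e, tmul_single_single, mul_one, pairT_single_single] at h
    rw [h, honee, hBθ1s j]
    ring
  have hB1w : ∀ w : FreeMonoid I, w ≠ 1 → B 1 (MonoidAlgebra.single w (1:𝔽)) = 0 := by
    intro w hw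
    rw [hBsymm]
    exact hBw1 w hw
  have hBθs : ∀ i j : I,
      B (MonoidAlgebra.single (FreeMonoid.of i) (1:𝔽)) (MonoidAlgebra.single (FreeMonoid.of j) 1)
        = if i = j then (1 - v ^ (-(cd.c i i)))⁻¹ else 0 := by
    intro i j; rw [hθB i, hθB j]; exact hBθ i j
  have hθws : ∀ (j : I) (u : FreeMonoid I), wt u ≠ δN j →
      B (MonoidAlgebra.single (FreeMonoid.of j) (1:𝔽)) (MonoidAlgebra.single u 1) = 0 := by
    intro j u hwt
    by_cases hu : u = 1
    · subst hu
      rw [honee]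
      exact hBθ1s j
    obtain ⟨k, u', rfl⟩ := exists_cons hu
    by_cases hu' : u' = 1
    · subst hu'
      have hjk : j ≠ k := by
        intro hh
        exact hwt (by rw [mul_one, wt_of, hh])
      rw [mul_one, hBθs, if_neg hjk]
    · have h := hBr (θ 𝔽 j) (θ 𝔽 k) (MonoidAlgebra.single u' 1)
      rw [rθe j] at h
      simp only [θ_def] at h
      rw [hsingle_mul, tmul_single_single, mul_one, pairT_add_left, pairT_single_single,
        pairT_single_single] at h
      rw [h, honee, hB1w u' hu', hB1w (FreeMonoid.of k) (Ne.symm (hof1 k))]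
      ring
  have horth : ∀ w u : FreeMonoid I, wt w ≠ wt u →
      B (MonoidAlgebra.single w (1:𝔽)) (MonoidAlgebra.single u 1) = 0 := by
    intro w
    induction w using FreeMonoid.recOn with
    | one =>
      intro u hwt
      have hu : u ≠ 1 := by
        intro hh
        subst hh
        exact hwt rfl
      rw [honee, hBsymm]
      exact hBw1 u hu
    | of_mul j w' ihw =>
      intro u hwt
      have h := hBl (θ 𝔽 j) (MonoidAlgebra.single w' 1) (MonoidAlgebra.single u 1)
      rw [θ_def j, hsingle_mul, tmul_single_single, mul_one, pairT_single_left] at h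
      rw [h, Finsupp.sum]
      apply Finset.sum_eq_zero
      intro q hq
      have hb := biwt u q hq
      by_cases h1 : wt q.1 = δN j
      · have h2 : wt w' ≠ wt q.2 := by
          intro hh
          exact hwt (by rw [wt_mul, wt_of, hh, ← h1, hb])
        rw [ihw q.2 h2]
        ring
      · rw [hθws j q.1 h1]
        ring
  have keyL : ∀ (w : FreeMonoid I) (i : I) (u : FreeMonoid I),
      B (MonoidAlgebra.single w (1:𝔽)) (MonoidAlgebra.single (FreeMonoid.of i * u) 1)
        = α.f (δN i) (wt w - δN i) * B (θ 𝔽 i) (θ 𝔽 i)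
            * B (ir i (MonoidAlgebra.single w 1)) (MonoidAlgebra.single u 1) := by
    intro w i u
    have h := hBr (MonoidAlgebra.single w (1:𝔽)) (θ 𝔽 i) (MonoidAlgebra.single u 1)
    rw [θ_def i, hsingle_mul, tmul_single_single, mul_one, pairT_single_right] at h
    have hR : B (comp1 (FreeMonoid.of i) (r (MonoidAlgebra.single w (1:𝔽))))
          (MonoidAlgebra.single u 1)
        = Finsupp.sum (r (MonoidAlgebra.single w (1:𝔽))).coeff fun p a =>
            B (if p.1 = FreeMonoid.of i then (MonoidAlgebra.single p.2 a : FA 𝔽 I) else 0)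
              (MonoidAlgebra.single u 1) := by
      rw [comp1_apply, Finsupp.sum, map_sum, LinearMap.sum_apply, Finsupp.sum]
    rw [h, ← c1of i w, hR, Finsupp.mul_sum]
    refine Finsupp.sum_congr fun p hp => ?_
    have hb := biwt w p hp
    by_cases hp1 : p.1 = FreeMonoid.of i
    · rw [if_pos hp1]
      rw [hp1, wt_of] at hb
      have hp2 : wt p.2 = wt w - δN i := eq_tsub_of_add_eq (by rw [add_comm]; exact hb)
      rw [hp1, wt_of, hp2, hθB i,
        single_eq_smul' p.2 ((r (MonoidAlgebra.single w (1:𝔽))).coeff p), map_smul,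
        LinearMap.smul_apply, smul_eq_mul]
      ring
    · rw [if_neg hp1, map_zero, LinearMap.zero_apply, mul_zero,
        hBsymm (MonoidAlgebra.single p.1 1) (MonoidAlgebra.single (FreeMonoid.of i) 1),
        hθws i p.1 (fun hh => hp1 (wt_eq_delta hh))]
      ring
  have keyR : ∀ (w : FreeMonoid I) (i : I) (u : FreeMonoid I),
      B (MonoidAlgebra.single w (1:𝔽)) (MonoidAlgebra.single (u * FreeMonoid.of i) 1)
        = α.f (wt w - δN i) (δN i) * B (θ 𝔽 i) (θ 𝔽 i)
            * B (ri i (MonoidAlgebra.single w 1)) (MonoidAlgebra.single u 1) := by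
    intro w i u
    have h := hBr (MonoidAlgebra.single w (1:𝔽)) (MonoidAlgebra.single u 1) (θ 𝔽 i)
    rw [θ_def i, hsingle_mul, tmul_single_single, mul_one, pairT_single_right] at h
    have hR : B (comp2 (FreeMonoid.of i) (r (MonoidAlgebra.single w (1:𝔽))))
          (MonoidAlgebra.single u 1)
        = Finsupp.sum (r (MonoidAlgebra.single w (1:𝔽))).coeff fun p a =>
            B (if p.2 = FreeMonoid.of i then (MonoidAlgebra.single p.1 a : FA 𝔽 I) else 0)
              (MonoidAlgebra.single u 1) := by
      rw [comp2_apply, Finsupp.sum, map_sum, LinearMap.sum_apply, Finsupp.sum]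
    rw [h, ← c2of i w, hR, Finsupp.mul_sum]
    refine Finsupp.sum_congr fun p hp => ?_
    have hb := biwt w p hp
    by_cases hp2 : p.2 = FreeMonoid.of i
    · rw [if_pos hp2]
      rw [hp2, wt_of] at hb
      have hp1 : wt p.1 = wt w - δN i := eq_tsub_of_add_eq hb
      rw [hp2, wt_of, hp1, hθB i,
        single_eq_smul' p.1 ((r (MonoidAlgebra.single w (1:𝔽))).coeff p), map_smul,
        LinearMap.smul_apply, smul_eq_mul]
      ring
    · rw [if_neg hp2, map_zero, LinearMap.zero_apply, mul_zero,
        hBsymm (MonoidAlgebra.single p.2 1) (MonoidAlgebra.single (FreeMonoid.of i) 1),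
        hθws i p.2 (fun hh => hp2 (wt_eq_delta hh))]
      ring
  -- expansion of a linear functional over the basis
  have Bexp : ∀ (φ : FA 𝔽 I →ₗ[𝔽] 𝔽) (y : FA 𝔽 I),
      φ y = Finsupp.sum y.coeff fun w c => c * φ (MonoidAlgebra.single w 1) := by
    intro φ y
    conv_lhs => rw [← MonoidAlgebra.sum_coeff_single y]
    rw [map_finsuppSum]
    refine Finsupp.sum_congr fun w hw => ?_
    rw [single_eq_smul, map_smul, smul_eq_mul]
  intro ν hν x hx
  have key1 : ∀ u : FreeMonoid I, wt u ≠ ν → B x (MonoidAlgebra.single u 1) = 0 := by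
    intro u hu
    rw [← LinearMap.flip_apply (f := B), Bexp (B.flip (MonoidAlgebra.single u 1)) x,
      Finsupp.sum]
    apply Finset.sum_eq_zero
    intro w hw
    rw [LinearMap.flip_apply, horth w u (by rw [hx w hw]; exact fun hh => hu hh.symm)]
    ring
  constructor
  · -- r_i part
    intro h0 z
    induction z using MonoidAlgebra.induction_linear with
    | zero => exact map_zero _
    | add f g hf hg => rw [map_add, hf, hg, add_zero]
    | single u c =>
      rw [single_eq_smul, map_smul, smul_eq_mul]
      by_cases hu : wt u = ν
      · have hu1 : u ≠ 1 := fun hh => hν (by rw [← hu, hh, wt_one])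
        obtain ⟨u', i, rfl⟩ := exists_concat hu1
        have hkey : B x (MonoidAlgebra.single (u' * FreeMonoid.of i) 1)
            = (α.f (ν - δN i) (δN i) * B (θ 𝔽 i) (θ 𝔽 i))
                * B (ri i x) (MonoidAlgebra.single u' 1) := by
          rw [← LinearMap.flip_apply (f := B), Bexp (B.flip _) x,
            show B (ri i x) (MonoidAlgebra.single u' 1)
              = ((B.flip (MonoidAlgebra.single u' 1)).comp (ri i)) x from rfl,
            Bexp ((B.flip (MonoidAlgebra.single u' 1)).comp (ri i)) x, Finsupp.mul_sum]
          refine Finsupp.sum_congr fun w hw => ?_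
          rw [LinearMap.flip_apply, keyR w i u', hx w hw, LinearMap.comp_apply,
            LinearMap.flip_apply]
          ring
        rw [hkey, h0 i]
        ring
      · rw [key1 u hu, mul_zero]
  · -- i_r part
    intro h0 z
    induction z using MonoidAlgebra.induction_linear with
    | zero => exact map_zero _
    | add f g hf hg => rw [map_add, hf, hg, add_zero]
    | single u c =>
      rw [single_eq_smul, map_smul, smul_eq_mul]
      by_cases hu : wt u = ν
      · have hu1 : u ≠ 1 := fun hh => hν (by rw [← hu, hh, wt_one])
        obtain ⟨i, u', rfl⟩ := exists_cons hu1
        have hkey : B x (MonoidAlgebra.single (FreeMonoid.of i * u') 1)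
            = (α.f (δN i) (ν - δN i) * B (θ 𝔽 i) (θ 𝔽 i))
                * B (ir i x) (MonoidAlgebra.single u' 1) := by
          rw [← LinearMap.flip_apply (f := B), Bexp (B.flip _) x,
            show B (ir i x) (MonoidAlgebra.single u' 1)
              = ((B.flip (MonoidAlgebra.single u' 1)).comp (ir i)) x from rfl,
            Bexp ((B.flip (MonoidAlgebra.single u' 1)).comp (ir i)) x, Finsupp.mul_sum]
          refine Finsupp.sum_congr fun w hw => ?_
          rw [LinearMap.flip_apply, keyL w i u', hx w hw, LinearMap.comp_apply,
            LinearMap.flip_apply]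
          ring
        rw [hkey, h0 i]
        ring
      · rw [key1 u hu, mul_zero]
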